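/- If the moduli satisfy the ordered-degree condition deg m_0 ≤ deg m_1 ≤ ... ≤ deg m_{n-1}, then every nonzero codeword ψ(a) with a ∈ R_{M_k}, a ≠ 0, has Hamming weight w_H(ψ(a)) ≥ n − k + 1. -/

import Mathlib

open Polynomial

open scoped Classical

lemma aux_le_apply {k n : ℕ} (g : Fin k → Fin n) (hg : StrictMono g) :
    ∀ r : ℕ, ∀ h : r < k, r ≤ (g ⟨r, h⟩ : ℕ) := by
  intro r
  induction r with
  | zero => intro h; exact Nat.zero_le _
  | succ i ih =>
    intro h
    have hi : i < k := Nat.lt_of_succ_lt h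
    have h1 : g ⟨i, hi⟩ < g ⟨i + 1, h⟩ := hg (by simp [Fin.lt_iff_val_lt_val])
    have h2 := Fin.lt_iff_val_lt_val.mp h1
    have := ih hi
    omega

/-- Under the ordered-degree condition `deg m_0 ≤ … ≤ deg m_{n-1}`, every
nonzero codeword (message `a ≠ 0`, `deg a < K`) has Hamming weight
(number of positions `i` with `a mod m i ≠ 0`) at least `n - k + 1`. -/
theorem stmt_4 {F : Type*} [Field F] (n k : ℕ) (hk1 : 1 ≤ k) (hkn : k ≤ n)
    (m : Fin n → F[X]) (hm : ∀ i, (m i).Monic) (hirr : ∀ i, Irreducible (m i))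
    (hinj : Function.Injective m)
    (hord : ∀ i j : Fin n, i ≤ j → (m i).natDegree ≤ (m j).natDegree)
    (K : ℕ)
    (hK : K = ∑ i ∈ Finset.univ.filter (fun i : Fin n => (i : ℕ) < k), (m i).natDegree)
    (a : F[X]) (ha : a ≠ 0) (hdeg : a.degree < (K : WithBot ℕ)) :
    n - k + 1 ≤ (Finset.univ.filter (fun i => ¬ m i ∣ a)).card := by
  have hcard := Finset.card_filter_add_card_filter_not
    (s := (Finset.univ : Finset (Fin n))) (p := fun i : Fin n => m i ∣ a)
  simp only [Finset.card_univ, Fintype.card_fin] at hcard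
  suffices hlt : (Finset.univ.filter (fun i : Fin n => m i ∣ a)).card < k by omega
  by_contra hge
  push_neg at hge
  obtain ⟨T, hTS, hTcard⟩ := Finset.exists_subset_card_eq hge
  -- product over T divides a
  have hdvdmem : ∀ i ∈ T, m i ∣ a := by
    intro i hi
    have := hTS hi
    rw [Finset.mem_filter] at this
    exact this.2
  have hcop : (↑T : Set (Fin n)).Pairwise (Function.onFun IsCoprime m) := by
    intro i _ j _ hij
    refine (Irreducible.coprime_iff_not_dvd (hirr i)).mpr ?_
    intro hdvd
    have hassoc : Associated (m i) (m j) := (hirr i).associated_of_dvd (hirr j) hdvd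
    exact hij (hinj (Polynomial.eq_of_monic_of_associated (hm i) (hm j) hassoc))
  have hprod : (∏ i ∈ T, m i) ∣ a := Finset.prod_dvd_of_coprime hcop hdvdmem
  have hne : ∀ i ∈ T, m i ≠ 0 := fun i _ => (hm i).ne_zero
  have hdegprod : (∏ i ∈ T, m i).natDegree = ∑ i ∈ T, (m i).natDegree :=
    Polynomial.natDegree_prod _ _ hne
  have hle1 : (∏ i ∈ T, m i).natDegree ≤ a.natDegree :=
    Polynomial.natDegree_le_of_dvd hprod ha
  have hltK : a.natDegree < K := by
    rwa [Polynomial.natDegree_lt_iff_degree_lt ha]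
  -- now show K ≤ ∑ i ∈ T, natDegree
  have hKle : K ≤ ∑ i ∈ T, (m i).natDegree := by
    set f := T.orderIsoOfFin hTcard with hf
    have hmono : StrictMono (fun j : Fin k => ((f j : Fin n))) := by
      intro x y hxy
      exact f.strictMono hxy
    have hinj2 : Function.Injective (fun j : Fin k => ((f j : Fin n))) :=
      hmono.injective
    have hTimg : T = Finset.image (fun j : Fin k => ((f j : Fin n))) Finset.univ := by
      ext i
      simp only [Finset.mem_image, Finset.mem_univ, true_and]
      constructor
      · intro hi
        exact ⟨f.symm ⟨i, hi⟩, by simp⟩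
      · rintro ⟨j, rfl⟩
        exact (f j).2
    have hKimg : Finset.univ.filter (fun i : Fin n => (i : ℕ) < k)
        = Finset.image (Fin.castLE hkn) Finset.univ := by
      ext i
      simp only [Finset.mem_filter, Finset.mem_univ, true_and, Finset.mem_image]
      constructor
      · intro hi
        exact ⟨⟨(i : ℕ), hi⟩, by ext; simp⟩
      · rintro ⟨j, rfl⟩
        simpa using j.2
    have hsumK : K = ∑ j : Fin k, (m (Fin.castLE hkn j)).natDegree := by
      rw [hK, hKimg, Finset.sum_image
        (fun x _ y _ h => Fin.castLE_injective hkn h)]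
    rw [hsumK, hTimg, Finset.sum_image (fun x _ y _ h => hinj2 h)]
    refine Finset.sum_le_sum ?_
    intro j _
    refine hord _ _ ?_
    rw [Fin.le_iff_val_le_val]
    simpa using aux_le_apply _ hmono (j : ℕ) j.2
  have hTn : T.card ≤ n := by
    have := hTS.trans (Finset.filter_subset _ _)
    simpa using Finset.card_le_card this
  omega
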